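/- Let σ : A* → A* be a primitive substitution prolongable on a letter a with fixed point x = σ^∞(a), and let u be a non-empty prefix of x. Then there exists a unique substitution σ_u on the return word alphabet R_{x,u} satisfying Θ_{x,u} ∘ σ_u = σ ∘ Θ_{x,u}; moreover σ_u is prolongable on the letter 1 and its unique fixed point is the derived sequence D_u(x). -/

import Mathlib

/-- The factor of the sequence `x` starting at position `i` of length `n`. -/
def seqWord {A : Type*} (x : ℕ → A) (i n : ℕ) : List A :=
  (List.range n).map (fun k => x (i + k))

/-- The word `u` occurs in the sequence `x` at position `i`. -/
def occursAt {A : Type*} (x : ℕ → A) (u : List A) (i : ℕ) : Prop :=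
  seqWord x i u.length = u

/-- `u` is a factor of the sequence `x`. -/
def IsFactor {A : Type*} (x : ℕ → A) (u : List A) : Prop :=
  ∃ i, occursAt x u i

/-- `u` is a prefix of the sequence `x`. -/
def IsPrefixSeq {A : Type*} (u : List A) (x : ℕ → A) : Prop :=
  occursAt x u 0

/-- `x` is uniformly recurrent: every factor occurs in every sufficiently long window. -/
def UnifRec {A : Type*} (x : ℕ → A) : Prop :=
  ∀ u : List A, IsFactor x u → ∃ C, ∀ i, ∃ j, i ≤ j ∧ j < i + C ∧ occursAt x u j

/-- `w` is a return word to `u` in `x`: the factor between two consecutive occurrences of `u`. -/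
def IsReturnWord {A : Type*} (x : ℕ → A) (u w : List A) : Prop :=
  ∃ i j, i < j ∧ occursAt x u i ∧ occursAt x u j ∧
    (∀ k, i < k → k < j → ¬ occursAt x u k) ∧ w = seqWord x i (j - i)

/-- Apply a morphism (given on letters) to a word, by concatenation. -/
def morphApply {I A : Type*} (θ : I → List A) (l : List I) : List A :=
  (l.map θ).flatten

/-- Iterate an endomorphism `σ` of the free monoid `n` times on a word. -/
def morphIter {A : Type*} (σ : A → List A) : ℕ → List A → List A
  | 0, l => l
  | n + 1, l => morphApply σ (morphIter σ n l)

/-- `x` is ultimately periodic. -/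
def UltPeriodic {A : Type*} (x : ℕ → A) : Prop :=
  ∃ p > 0, ∃ N, ∀ n ≥ N, x (n + p) = x n

/-- `x` is linearly recurrent with constant `K`: it is uniformly recurrent and two
successive occurrences of any nonempty factor `u` differ by at most `K * |u|`. -/
def LinRec {A : Type*} (K : ℕ) (x : ℕ → A) : Prop :=
  UnifRec x ∧ ∀ u : List A, u ≠ [] → IsFactor x u →
    ∀ i, occursAt x u i → ∃ j, i < j ∧ j ≤ i + K * u.length ∧ occursAt x u j

/-- `σ` is prolongable on the letter `a`. -/
def Prolongable {A : Type*} (σ : A → List A) (a : A) : Prop :=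
  (∃ t, σ a = a :: t ∧ t ≠ []) ∧
    Filter.Tendsto (fun n => (morphIter σ n [a]).length) Filter.atTop Filter.atTop

/-- `σ` is growing: the image of each letter has length tending to infinity. -/
def Growing {A : Type*} (σ : A → List A) : Prop :=
  ∀ a, Filter.Tendsto (fun n => (morphIter σ n [a]).length) Filter.atTop Filter.atTop

/-- `σ` is primitive: some power sends every letter to a word containing every letter. -/
def Primitive {A : Type*} (σ : A → List A) : Prop :=
  ∃ n > 0, ∀ a b : A, b ∈ morphIter σ n [a]

/-- `x` is the fixed point `σ^∞(a)` of `σ`, prolongable on `a`. -/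
def IsFixedPointOf {A : Type*} (σ : A → List A) (a : A) (x : ℕ → A) : Prop :=
  x 0 = a ∧ ∀ n, IsPrefixSeq (morphIter σ n [a]) x

/-- The word `w` belongs to the language of the endomorphism `σ`. -/
def InLang {A : Type*} (σ : A → List A) (w : List A) : Prop :=
  ∃ a n, w <:+: morphIter σ n [a]

/-- The word `u` occurs at position `i` in the word `w`. -/
def listOccursAt {A : Type*} (w u : List A) (i : ℕ) : Prop :=
  i + u.length ≤ w.length ∧ (w.drop i).take u.length = u

/-- `|σ^k|`: the maximal length of the image of a letter under `σ^k`. -/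
def maxLen {A : Type*} [Fintype A] [Nonempty A] (σ : A → List A) (k : ℕ) : ℕ :=
  Finset.univ.sup' Finset.univ_nonempty (fun a => (morphIter σ k [a]).length)

/-- `⟨σ^k⟩`: the minimal length of the image of a letter under `σ^k`. -/
def minLen {A : Type*} [Fintype A] [Nonempty A] (σ : A → List A) (k : ℕ) : ℕ :=
  Finset.univ.inf' Finset.univ_nonempty (fun a => (morphIter σ k [a]).length)

/-- `(R, θ, z)` is the derived-sequence data of `x` on the prefix `u`: `θ 0, …, θ (R-1)`
enumerate the return words to `u` in order of first appearance in `x`, `z` is the derived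
sequence, i.e. the coding of the decomposition of `x` into return words to `u`,
so that `Θ_{x,u}(z) = x`. -/
def IsDerivedSeq {A : Type*} (x : ℕ → A) (u : List A) (R : ℕ)
    (θ : ℕ → List A) (z : ℕ → ℕ) : Prop :=
  (∀ i < R, IsReturnWord x u (θ i)) ∧
  (∀ w, IsReturnWord x u w → ∃ i < R, θ i = w) ∧
  (∀ i < R, ∀ j < R, i < j →
      sInf {k | occursAt x (θ i) k} < sInf {k | occursAt x (θ j) k}) ∧
  (∀ k, z k < R) ∧
  (∀ n, IsPrefixSeq (morphApply θ (seqWord z 0 n)) x)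

section Aux
variable {A : Type*}

@[simp] theorem seqWord_length (x : ℕ → A) (i n : ℕ) : (seqWord x i n).length = n := by
  simp [seqWord]

theorem seqWord_getElem (x : ℕ → A) {i n k : ℕ} (h : k < (seqWord x i n).length) :
    (seqWord x i n)[k] = x (i + k) := by
  simp [seqWord]

theorem seqWord_zero (x : ℕ → A) (i : ℕ) : seqWord x i 0 = [] := rfl

theorem seqWord_one (x : ℕ → A) (i : ℕ) : seqWord x i 1 = [x i] := by
  simp [seqWord, List.range_succ]

theorem seqWord_append (x : ℕ → A) (i m n : ℕ) :
    seqWord x i (m + n) = seqWord x i m ++ seqWord x (i + m) n := by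
  apply List.ext_getElem
  · simp
  · intro k h1 h2
    simp only [seqWord_length] at h1
    rcases Nat.lt_or_ge k m with hk | hk
    · rw [List.getElem_append_left (by simpa using hk)]
      rw [seqWord_getElem, seqWord_getElem]
    · rw [List.getElem_append_right (by simpa using hk)]
      rw [seqWord_getElem, seqWord_getElem]
      simp only [seqWord_length]
      congr 1
      omega

theorem seqWord_cons (x : ℕ → A) (i n : ℕ) :
    seqWord x i (n + 1) = x i :: seqWord x (i + 1) n := by
  have := seqWord_append x i 1 n
  rw [add_comm 1 n] at this
  rw [this, seqWord_one]
  rfl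

theorem seqWord_snoc (x : ℕ → A) (i n : ℕ) :
    seqWord x i (n + 1) = seqWord x i n ++ [x (i + n)] := by
  rw [seqWord_append, seqWord_one]

theorem seqWord_take (x : ℕ → A) {i m n : ℕ} (h : m ≤ n) :
    (seqWord x i n).take m = seqWord x i m := by
  rw [show n = m + (n - m) by omega, seqWord_append]
  rw [List.take_append_of_le_length (by simp), List.take_of_length_le (by simp)]

theorem occursAt_iff {x : ℕ → A} {u : List A} {p : ℕ} :
    occursAt x u p ↔ ∀ k (h : k < u.length), u[k] = x (p + k) := by
  constructor
  · intro h k hk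
    have h3 : (seqWord x p u.length)[k]? = u[k]? := by rw [h]
    rw [List.getElem?_eq_getElem (by simpa using hk), List.getElem?_eq_getElem hk] at h3
    have h4 : (seqWord x p u.length)[k]'(by simpa using hk) = x (p + k) :=
      seqWord_getElem x (by simpa using hk)
    rw [← Option.some_inj.mp h3, h4]
  · intro h
    apply List.ext_getElem (by simp)
    intro k h1 h2
    rw [seqWord_getElem, h k h2]

theorem morphApply_nil {I : Type*} (θ : I → List A) : morphApply θ [] = [] := rfl

theorem morphApply_cons {I : Type*} (θ : I → List A) (j : I) (l : List I) :
    morphApply θ (j :: l) = θ j ++ morphApply θ l := by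
  simp [morphApply]

theorem morphApply_append {I : Type*} (θ : I → List A) (l1 l2 : List I) :
    morphApply θ (l1 ++ l2) = morphApply θ l1 ++ morphApply θ l2 := by
  simp [morphApply]

theorem morphApply_singleton {I : Type*} (θ : I → List A) (j : I) :
    morphApply θ [j] = θ j := by
  simp [morphApply]

theorem prefix_seqWord {x : ℕ → A} {w : List A} {L : ℕ} (h : w <+: seqWord x 0 L) :
    seqWord x 0 w.length = w := by
  have hlen : w.length ≤ L := by simpa using h.length_le
  rw [List.prefix_iff_eq_take] at h
  conv_rhs => rw [h]
  rw [seqWord_take _ hlen]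

end Aux

/-- Proposition (Durand 1998): let `σ` be a primitive substitution prolongable on `a`
with fixed point `x = σ^∞(a)`, `u` a non-empty prefix of `x`, and `(R, θ, z)` the
derived-sequence data of `x` on `u` (so `z = D_u(x)` and `θ` realizes `Θ_{x,u}`). Then
there is a unique substitution `σu` on the return-word alphabet `{0, …, R-1}` with
`Θ_{x,u} ∘ σu = σ ∘ Θ_{x,u}`; moreover `σu` is prolongable on the first letter `0`
(the letter `1` of the paper) and its unique fixed point is the derived sequence
`z = D_u(x)`. -/
theorem return_substitution {A : Type*} [Fintype A] (σ : A → List A) (a : A)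
    (hprim : Primitive σ) (hgrow : Growing σ) (hprol : Prolongable σ a)
    (x : ℕ → A) (hx : IsFixedPointOf σ a x)
    (u : List A) (hu : u ≠ []) (hup : IsPrefixSeq u x)
    (R : ℕ) (θ : ℕ → List A) (z : ℕ → ℕ) (hd : IsDerivedSeq x u R θ z) :
    ∃ σu : ℕ → List ℕ,
      (∀ i < R, ∀ j ∈ σu i, j < R) ∧
      (∀ i < R, morphApply θ (σu i) = morphApply σ (θ i)) ∧
      (∀ σu' : ℕ → List ℕ, (∀ i < R, ∀ j ∈ σu' i, j < R) →
        (∀ i < R, morphApply θ (σu' i) = morphApply σ (θ i)) →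
        ∀ i < R, σu' i = σu i) ∧
      (∃ t, σu 0 = 0 :: t ∧ t ≠ []) ∧
      Filter.Tendsto (fun n => (morphIter σu n [0]).length) Filter.atTop Filter.atTop ∧
      (∀ n, IsPrefixSeq (morphIter σu n [0]) z) := by
  classical
  obtain ⟨hret, hall, hord, hzR, hpre⟩ := hd
  obtain ⟨⟨t0, hσa, ht0⟩, htend⟩ := hprol
  obtain ⟨hx0, hxpre⟩ := hx
  -- θ is injective on [0, R)
  have hθinj : ∀ i < R, ∀ j < R, θ i = θ j → i = j := by
    intro i hi j hj hij
    by_contra hne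
    rcases Nat.lt_or_ge i j with h | h
    · have := hord i hi j hj h
      rw [hij] at this
      exact lt_irrefl _ this
    · have hlt : j < i := by omega
      have := hord j hj i hi hlt
      rw [hij] at this
      exact lt_irrefl _ this
  -- return words are nonempty
  have hretne : ∀ w : List A, IsReturnWord x u w → w ≠ [] := by
    rintro w ⟨i, j, hij, -, -, -, rfl⟩
    intro h
    apply_fun List.length at h
    simp only [seqWord_length, List.length_nil] at h
    omega
  -- the sequence of cut points S
  set S : ℕ → ℕ := fun n => (morphApply θ (seqWord z 0 n)).length with hS_def
  have hS0 : S 0 = 0 := by simp [hS_def, seqWord_zero, morphApply_nil]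
  have hSsucc : ∀ n, S (n + 1) = S n + (θ (z n)).length := by
    intro n
    simp only [hS_def]
    rw [seqWord_snoc, morphApply_append, morphApply_singleton, List.length_append]
    simp
  have hretlen : ∀ n, 1 ≤ (θ (z n)).length :=
    fun n => List.length_pos_iff.mpr (hretne _ (hret _ (hzR n)))
  have hSmono : StrictMono S := by
    apply strictMono_nat_of_lt_succ
    intro n
    have := hretlen n
    rw [hSsucc]
    omega
  have hSle : ∀ n, n ≤ S n := fun n => hSmono.le_apply
  have hprefS : ∀ n, seqWord x 0 (S n) = morphApply θ (seqWord z 0 n) := by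
    intro n
    exact hpre n
  have hblock : ∀ n, seqWord x (S n) ((θ (z n)).length) = θ (z n) := by
    intro n
    have h1 := hprefS (n + 1)
    have h2 := seqWord_append x 0 (S n) ((θ (z n)).length)
    rw [zero_add] at h2
    rw [hSsucc, h2, hprefS n, seqWord_snoc, zero_add, morphApply_append,
      morphApply_singleton] at h1
    exact List.append_cancel_left h1
  have hseg : ∀ f g, f ≤ g → morphApply θ (seqWord z f (g - f)) = seqWord x (S f) (S g - S f) := by
    intro f g hfg
    have hm : S f ≤ S g := hSmono.monotone hfg
    have h1 := seqWord_append x 0 (S f) (S g - S f)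
    rw [zero_add, show S f + (S g - S f) = S g by omega] at h1
    have h2 := seqWord_append z 0 f (g - f)
    rw [zero_add, show f + (g - f) = g by omega] at h2
    have h3 : morphApply θ (seqWord z 0 g) =
        morphApply θ (seqWord z 0 f) ++ morphApply θ (seqWord z f (g - f)) := by
      rw [h2, morphApply_append]
    rw [hprefS, hprefS] at h1
    rw [h1] at h3
    exact (List.append_cancel_left h3).symm
  -- intrinsic facts about return words
  have hretelem : ∀ w : List A, IsReturnWord x u w →
      (∀ k (hk : k < u.length) (hk' : k < w.length), w[k] = u[k]) ∧
      (∀ k (hk : k < u.length), w.length ≤ k →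
        u[k] = u[k - w.length]'(by omega)) := by
    rintro w ⟨i, j, hij, hui, huj, hbet, rfl⟩
    have hlen : (seqWord x i (j - i)).length = j - i := seqWord_length x i (j - i)
    have hji : j = i + (j - i) := by omega
    constructor
    · intro k hk hk'
      rw [seqWord_getElem x hk']
      rw [occursAt_iff.mp hui k hk]
    · intro k hk hge
      rw [hlen] at hge
      have hk2 : k - (j - i) < u.length := by omega
      rw [occursAt_iff.mp hui k hk]
      have h2 := occursAt_iff.mp huj (k - (j - i)) hk2
      have h3 : u[k - (seqWord x i (j - i)).length]'(by omega) =
          u[k - (j - i)]'hk2 := by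
        congr 1
        rw [hlen]
      rw [h3, h2]
      congr 1
      omega
  -- the sequence x agrees with u after every cut point
  have hu_at : ∀ k (hk : k < u.length) (n : ℕ), x (S n + k) = u[k] := by
    intro k
    induction k using Nat.strong_induction_on with
    | _ k IH =>
      intro hk n
      obtain ⟨h1, h2⟩ := hretelem (θ (z n)) (hret _ (hzR n))
      rcases Nat.lt_or_ge k ((θ (z n)).length) with hcase | hcase
      · have hb := hblock n
        have h3 : (seqWord x (S n) ((θ (z n)).length))[k]'(by simpa using hcase) =
            x (S n + k) := seqWord_getElem x (by simpa using hcase)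
        have h4 : (θ (z n))[k]'hcase = u[k] := h1 k hk hcase
        rw [← h4, ← h3]
        congr 1
      · have h5 : S n + k = S (n + 1) + (k - (θ (z n)).length) := by
          rw [hSsucc]; omega
        have h6 := hretlen n
        rw [h5, IH (k - (θ (z n)).length) (by omega) (by omega) (n + 1)]
        exact (h2 k hk hcase).symm
  have hu_occ : ∀ n, occursAt x u (S n) :=
    fun n => occursAt_iff.mpr (fun k hk => (hu_at k hk n).symm)
  -- the key transfer step
  have hkeyStep : ∀ w : List A, IsReturnWord x u w → ∀ p,
      seqWord x p w.length = w → occursAt x u (p + w.length) →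
      occursAt x u p ∧ ∀ q, p < q → q < p + w.length → ¬ occursAt x u q := by
    intro w hw p hp he
    obtain ⟨i, j, hij, hui, huj, hbet, hweq⟩ := hw
    have hwlen : w.length = j - i := by rw [hweq]; simp
    have hji : j = i + w.length := by omega
    have hpt : ∀ s, s ≤ w.length → ∀ k (hk : k < u.length), x (p + s + k) = x (i + s + k) := by
      intro s hs k hk
      rcases Nat.lt_or_ge (s + k) w.length with hc | hc
      · have ha1 : (seqWord x p w.length)[s + k]'(by simpa using hc) = x (p + (s + k)) :=
          seqWord_getElem x (by simpa using hc)
        have ha2 : (seqWord x i (j - i))[s + k]'(by simp; omega) = x (i + (s + k)) :=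
          seqWord_getElem x (by simp; omega)
        have ha3 : (seqWord x p w.length)[s + k]'(by simpa using hc) =
            (seqWord x i (j - i))[s + k]'(by simp; omega) := by
          congr 1
          rw [hp, hweq]
        rw [← add_assoc] at ha1 ha2
        rw [← ha1, ← ha2, ha3]
      · have hr : s + k - w.length < u.length := by omega
        have hb1 := occursAt_iff.mp he (s + k - w.length) hr
        have hb2 := occursAt_iff.mp huj (s + k - w.length) hr
        have he1 : p + s + k = p + w.length + (s + k - w.length) := by omega
        have he2 : i + s + k = j + (s + k - w.length) := by omega
        rw [he1, ← hb1, he2, ← hb2]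
    have htrans : ∀ s, s ≤ w.length → (occursAt x u (p + s) ↔ occursAt x u (i + s)) := by
      intro s hs
      rw [occursAt_iff, occursAt_iff]
      constructor
      · intro h k hk
        rw [h k hk, hpt s hs k hk]
      · intro h k hk
        rw [h k hk, ← hpt s hs k hk]
    constructor
    · have := (htrans 0 (Nat.zero_le _)).mpr
      simpa using this (by simpa using hui)
    · intro q hq1 hq2 hocc
      have hs1 : q - p ≤ w.length := by omega
      have := (htrans (q - p) hs1).mp (by rwa [show p + (q - p) = q by omega])
      exact hbet (i + (q - p)) (by omega) (by omega) this
  -- locating positions between cut points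
  have hint : ∀ p, ∃ n, S n ≤ p ∧ p < S (n + 1) := by
    intro p
    induction p with
    | zero =>
      refine ⟨0, by omega, ?_⟩
      have := hSmono (show 0 < 0 + 1 by omega)
      omega
    | succ p ih =>
      obtain ⟨n, h1, h2⟩ := ih
      rcases Nat.lt_or_ge (p + 1) (S (n + 1)) with h | h
      · exact ⟨n, by omega, h⟩
      · refine ⟨n + 1, by omega, ?_⟩
        have := hSmono (show n + 1 < n + 1 + 1 by omega)
        omega
  -- occurrences of u are exactly the cut points
  have hocc_iff : ∀ p, occursAt x u p → ∃ n, S n = p := by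
    intro p hp
    obtain ⟨n, h1, h2⟩ := hint p
    rcases Nat.eq_or_lt_of_le h1 with h | h
    · exact ⟨n, h⟩
    · exfalso
      have hb := hblock n
      have hks := hkeyStep (θ (z n)) (hret _ (hzR n)) (S n) hb
        (by rw [show S n + (θ (z n)).length = S (n + 1) from (hSsucc n).symm]; exact hu_occ (n + 1))
      refine hks.2 p h ?_ hp
      rw [show S n + (θ (z n)).length = S (n + 1) from (hSsucc n).symm]
      exact h2
  -- if u occurs after a block of return words, it occurs before it
  have hocc_before : ∀ l : List ℕ, (∀ j ∈ l, j < R) → ∀ p,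
      morphApply θ l = seqWord x p ((morphApply θ l).length) →
      occursAt x u (p + (morphApply θ l).length) → occursAt x u p := by
    intro l
    induction l with
    | nil =>
      intro _ p _ h
      simpa [morphApply_nil] using h
    | cons j l' IH =>
      intro hl p heq hocc
      have hj : j < R := hl j (List.mem_cons_self)
      rw [morphApply_cons] at heq hocc
      rw [List.length_append] at heq hocc
      rw [seqWord_append] at heq
      have hinj := List.append_inj heq (by simp)
      have h1 : seqWord x p (θ j).length = θ j := hinj.1.symm
      have h2 : morphApply θ l' = seqWord x (p + (θ j).length) ((morphApply θ l').length) :=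
        hinj.2
      have hocc2 : occursAt x u (p + (θ j).length + (morphApply θ l').length) := by
        rw [add_assoc]
        exact hocc
      have h3 := IH (fun j hj => hl j (List.mem_cons_of_mem _ hj)) (p + (θ j).length) h2 hocc2
      exact (hkeyStep (θ j) (hret j hj) p h1 h3).1
  -- unique decoding into return words
  have hdecode : ∀ l : List ℕ, (∀ j ∈ l, j < R) → ∀ n m,
      S n + (morphApply θ l).length = S m →
      morphApply θ l = seqWord x (S n) ((morphApply θ l).length) →
      m = n + l.length ∧ l = seqWord z n l.length := by
    intro l
    induction l with
    | nil =>
      intro _ n m h1 _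
      simp only [morphApply_nil, List.length_nil, Nat.add_zero] at h1 ⊢
      exact ⟨(hSmono.injective h1).symm, rfl⟩
    | cons j l' IH =>
      intro hl n m hlen heq
      have hj : j < R := hl j (List.mem_cons_self)
      rw [morphApply_cons] at heq hlen
      rw [List.length_append] at heq hlen
      rw [seqWord_append] at heq
      have hinj := List.append_inj heq (by simp)
      have h1 : seqWord x (S n) (θ j).length = θ j := hinj.1.symm
      have h2 : morphApply θ l' = seqWord x (S n + (θ j).length) ((morphApply θ l').length) :=
        hinj.2
      have hocc2 : occursAt x u (S n + (θ j).length + (morphApply θ l').length) := by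
        rw [add_assoc, hlen]
        exact hu_occ m
      have hoccmid : occursAt x u (S n + (θ j).length) :=
        hocc_before l' (fun j hj => hl j (List.mem_cons_of_mem _ hj)) _ h2 hocc2
      have hks := hkeyStep (θ j) (hret j hj) (S n) h1 hoccmid
      obtain ⟨tt, htt⟩ := hocc_iff _ hoccmid
      have hθjne : 0 < (θ j).length := List.length_pos_iff.mpr (hretne _ (hret j hj))
      have htn : n < tt := by
        have : S n < S tt := by omega
        exact hSmono.lt_iff_lt.mp this
      have htt1 : tt = n + 1 := by
        by_contra hc
        have hx1 : S n < S (n + 1) := hSmono (by omega)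
        have hx2 : S (n + 1) < S tt := hSmono (by omega)
        exact hks.2 (S (n + 1)) hx1 (by omega) (hu_occ (n + 1))
      subst htt1
      have hwlen : (θ j).length = (θ (z n)).length := by
        have := hSsucc n
        omega
      have hweq : θ j = θ (z n) := by
        rw [← h1, hwlen, hblock n]
      have hjz : j = z n := hθinj j hj (z n) (hzR n) hweq
      have hSn1 : S n + (θ j).length = S (n + 1) := by
        have := hSsucc n
        omega
      have hIH := IH (fun j hj => hl j (List.mem_cons_of_mem _ hj)) (n + 1) m
        (by rw [← hSn1]; omega) (by rw [← hSn1]; exact h2)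
      refine ⟨by rw [hIH.1]; simp [List.length_cons]; omega, ?_⟩
      rw [List.length_cons, seqWord_cons, ← hIH.2, hjz]
  -- the first letter of z is 0
  have hz0 : z 0 = 0 := by
    by_contra h
    have hzlt := hzR 0
    have h1 := hord 0 (by omega) (z 0) hzlt (by omega)
    have h2 : occursAt x (θ (z 0)) 0 := by
      have hb := hblock 0
      rw [hS0] at hb
      exact hb
    have h3 : sInf {k | occursAt x (θ (z 0)) k} = 0 :=
      Nat.sInf_eq_zero.mpr (Or.inl h2)
    rw [h3] at h1
    omega
  -- every letter below R is attained by z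
  have hz_onto : ∀ i < R, ∃ n, z n = i := by
    intro i hi
    obtain ⟨p, q, hpq, hup', huq', hbet', hweq'⟩ := hret i hi
    obtain ⟨n, rfl⟩ := hocc_iff p hup'
    obtain ⟨m, rfl⟩ := hocc_iff q huq'
    have hmn : n < m := hSmono.lt_iff_lt.mp hpq
    have hm : m = n + 1 := by
      by_contra hc
      exact hbet' (S (n + 1)) (hSmono (by omega)) (hSmono (by omega)) (hu_occ (n + 1))
    refine ⟨n, hθinj (z n) (hzR n) i hi ?_⟩
    rw [hweq', hm]
    rw [show S (n + 1) - S n = (θ (z n)).length by rw [hSsucc]; omega]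
    exact (hblock n).symm
  -- images of letters under σ are nonempty
  have hσne : ∀ b, σ b ≠ [] := by
    intro b hb
    have hiter : ∀ n, morphIter σ (n + 1) [b] = [] := by
      intro n
      induction n with
      | zero => simp [morphIter, morphApply, hb]
      | succ n ih =>
        show morphApply σ (morphIter σ (n + 1) [b]) = []
        rw [ih, morphApply_nil]
    obtain ⟨n, hn1, hn2⟩ := (((hgrow b).eventually_ge_atTop 1).and
      (Filter.eventually_ge_atTop 1)).exists
    rw [show n = (n - 1) + 1 by omega, hiter (n - 1)] at hn1
    simp at hn1
  -- the cut points under σ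
  set T : ℕ → ℕ := fun p => (morphApply σ (seqWord x 0 p)).length with hT_def
  have hT0 : T 0 = 0 := by simp [hT_def, seqWord_zero, morphApply_nil]
  have hTsucc : ∀ p, T (p + 1) = T p + (σ (x p)).length := by
    intro p
    simp only [hT_def]
    rw [seqWord_snoc, zero_add, morphApply_append, morphApply_singleton, List.length_append]
  have hTstep : ∀ p, 1 ≤ (σ (x p)).length := fun p => List.length_pos_iff.mpr (hσne (x p))
  have hTmono : StrictMono T := by
    apply strictMono_nat_of_lt_succ
    intro p
    have := hTstep p
    rw [hTsucc]
    omega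
  have hTadd : ∀ p k, T p + k ≤ T (p + k) := by
    intro p k
    induction k with
    | zero => simp
    | succ k ih =>
      have := hTstep (p + k)
      rw [show p + (k + 1) = (p + k) + 1 by omega, hTsucc]
      omega
  have hσa2 : 2 ≤ (σ a).length := by
    rw [hσa]
    have := List.length_pos_iff.mpr ht0
    simp only [List.length_cons]
    omega
  have hTgt : ∀ p, 1 ≤ p → p + 1 ≤ T p := by
    intro p hp
    have h1 : T 1 = (σ a).length := by
      rw [show (1 : ℕ) = 0 + 1 from rfl, hTsucc, hT0, hx0]
      omega
    have h2 := hTadd 1 (p - 1)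
    rw [show 1 + (p - 1) = p by omega] at h2
    omega
  -- σ maps prefixes of x to prefixes of x
  have hprefT : ∀ p, seqWord x 0 (T p) = morphApply σ (seqWord x 0 p) := by
    intro p
    obtain ⟨n, hn⟩ := (htend.eventually_ge_atTop p).exists
    have hxa : ∀ m, seqWord x 0 ((morphIter σ m [a]).length) = morphIter σ m [a] :=
      fun m => hxpre m
    have h1 : seqWord x 0 p = (morphIter σ n [a]).take p := by
      rw [← hxa n, seqWord_take _ hn]
    have h2 : morphApply σ (seqWord x 0 p) <+: morphIter σ (n + 1) [a] := by
      rw [h1]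
      obtain ⟨s, hs⟩ := List.take_prefix p (morphIter σ n [a])
      refine ⟨morphApply σ s, ?_⟩
      show morphApply σ _ ++ morphApply σ s = morphApply σ (morphIter σ n [a])
      rw [← morphApply_append, hs]
    have h3 : morphApply σ (seqWord x 0 p) <+:
        seqWord x 0 ((morphIter σ (n + 1) [a]).length) := by
      rw [hxa]
      exact h2
    exact prefix_seqWord h3
  -- σ maps factors at cut points to factors at cut points
  have hfacT : ∀ p q, p ≤ q →
      seqWord x (T p) (T q - T p) = morphApply σ (seqWord x p (q - p)) := by
    intro p q hpq
    have hm : T p ≤ T q := hTmono.monotone hpq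
    have h1 := seqWord_append x 0 (T p) (T q - T p)
    rw [zero_add, show T p + (T q - T p) = T q by omega] at h1
    have h2 := seqWord_append x 0 p (q - p)
    rw [zero_add, show p + (q - p) = q by omega] at h2
    have h3 : morphApply σ (seqWord x 0 q) =
        morphApply σ (seqWord x 0 p) ++ morphApply σ (seqWord x p (q - p)) := by
      rw [h2, morphApply_append]
    rw [hprefT, hprefT] at h1
    rw [h1] at h3
    exact List.append_cancel_left h3
  -- σ maps occurrences of u to occurrences of u
  have hToccu : ∀ p, occursAt x u p → occursAt x u (T p) := by
    intro p hp
    have h1 : seqWord x (T p) (T (p + u.length) - T p) = morphApply σ u := by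
      rw [hfacT p (p + u.length) (Nat.le_add_right _ _)]
      congr 1
      rw [show p + u.length - p = u.length by omega]
      exact hp
    have hlen : u.length ≤ T (p + u.length) - T p := by
      have := hTadd p u.length
      have := hTmono.monotone (Nat.le_add_right p u.length)
      omega
    have h2 : seqWord x (T p) u.length = (morphApply σ u).take u.length := by
      rw [← h1, seqWord_take _ hlen]
    have h3 : (morphApply σ u).take u.length = u := by
      have hu1 : morphApply σ u = seqWord x 0 (T u.length) := by
        rw [hprefT u.length]
        congr 1
        exact hup.symm
      have hu2 : u.length ≤ T u.length := by
        have h := hTadd 0 u.length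
        rw [hT0, zero_add] at h
        omega
      rw [hu1, seqWord_take _ hu2]
      exact hup
    show seqWord x (T p) u.length = u
    rw [h2, h3]
  -- the induced map F on indices of cut points
  have hFex : ∀ n, ∃ m, S m = T (S n) := fun n => hocc_iff _ (hToccu _ (hu_occ n))
  choose F hF using hFex
  have hFmono : StrictMono F := by
    intro a1 b1 hab
    have : S (F a1) < S (F b1) := by
      rw [hF, hF]
      exact hTmono (hSmono hab)
    exact hSmono.lt_iff_lt.mp this
  have hF0 : F 0 = 0 := by
    apply hSmono.injective
    rw [hF, hS0, hT0]
  have hFgt : ∀ m, 1 ≤ m → m + 1 ≤ F m := by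
    intro m hm
    have h1 : S m + 1 ≤ T (S m) := by
      have := hTgt (S m) (by have := hSle m; omega)
      omega
    have h2 : S m < S (F m) := by
      rw [hF]
      omega
    have := hSmono.lt_iff_lt.mp h2
    omega
  -- representation of σ(θ (z m)) as a factor between cut points
  have hrep : ∀ m, morphApply σ (θ (z m)) = seqWord x (S (F m)) (S (F (m + 1)) - S (F m)) := by
    intro m
    rw [hF, hF, hfacT (S m) (S (m + 1)) (hSmono.monotone (by omega))]
    congr 1
    rw [show S (m + 1) - S m = (θ (z m)).length by rw [hSsucc]; omega]
    exact (hblock m).symm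
  have hkeyσ : ∀ m, morphApply θ (seqWord z (F m) (F (m + 1) - F m)) =
      morphApply σ (θ (z m)) := by
    intro m
    rw [hseg (F m) (F (m + 1)) (hFmono.monotone (by omega))]
    exact (hrep m).symm
  -- the unique decoding of σ(θ (z m))
  have hdec2 : ∀ l : List ℕ, (∀ j ∈ l, j < R) → ∀ m,
      morphApply θ l = morphApply σ (θ (z m)) →
      l = seqWord z (F m) (F (m + 1) - F m) := by
    intro l hl m heq
    have hFle : S (F m) ≤ S (F (m + 1)) := (hSmono (hFmono (by omega))).le
    have hlen' : (morphApply θ l).length = S (F (m + 1)) - S (F m) := by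
      rw [heq, hrep m, seqWord_length]
    have h1 : S (F m) + (morphApply θ l).length = S (F (m + 1)) := by
      rw [hlen']
      omega
    have h2 : morphApply θ l = seqWord x (S (F m)) ((morphApply θ l).length) := by
      rw [hlen', heq, hrep m]
    obtain ⟨hm, hl2⟩ := hdecode l hl (F m) (F (m + 1)) h1 h2
    rw [hl2]
    congr 1
    omega
  -- the substitution on return words
  set σu : ℕ → List ℕ := fun i =>
    if h : ∃ n, z n = i then seqWord z (F h.choose) (F (h.choose + 1) - F h.choose)
    else [] with hσu_def
  have hσu_lt : ∀ i, ∀ j ∈ σu i, j < R := by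
    intro i j hj
    rw [hσu_def] at hj
    simp only at hj
    split at hj
    · simp only [seqWord, List.mem_map, List.mem_range] at hj
      obtain ⟨k, -, rfl⟩ := hj
      exact hzR _
    · simp at hj
  have hσu_eq : ∀ n, σu (z n) = seqWord z (F n) (F (n + 1) - F n) := by
    intro n
    have hex : ∃ n', z n' = z n := ⟨n, rfl⟩
    have hch : z hex.choose = z n := hex.choose_spec
    have h0 : σu (z n) = seqWord z (F hex.choose) (F (hex.choose + 1) - F hex.choose) := by
      rw [hσu_def]
      simp only
      rw [dif_pos hex]
    rw [h0]
    apply hdec2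
    · intro j hj
      simp only [seqWord, List.mem_map, List.mem_range] at hj
      obtain ⟨k, -, rfl⟩ := hj
      exact hzR _
    · rw [hkeyσ hex.choose, hch]
  refine ⟨σu, fun i _ j hj => hσu_lt i j hj, ?_, ?_, ?_, ?_, ?_⟩
  · -- conjugacy
    intro i hi
    obtain ⟨n, rfl⟩ := hz_onto i hi
    rw [hσu_eq n, hkeyσ n]
  · -- uniqueness
    intro σu' h1 h2 i hi
    obtain ⟨n, rfl⟩ := hz_onto i hi
    rw [hσu_eq n]
    exact hdec2 (σu' (z n)) (h1 _ hi) n (by rw [h2 _ hi])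
  · -- prolongable on 0
    have hF1 : 2 ≤ F 1 := hFgt 1 le_rfl
    have h40 : σu 0 = seqWord z 0 (F 1) := by
      have h := hσu_eq 0
      rw [hz0, hF0] at h
      simpa using h
    refine ⟨seqWord z 1 (F 1 - 1), ?_, ?_⟩
    · rw [h40, show F 1 = (F 1 - 1) + 1 by omega, seqWord_cons, hz0]
      rfl
    · intro h
      apply_fun List.length at h
      simp only [seqWord_length, List.length_nil] at h
      omega
  all_goals {
  have hmap : ∀ m, morphApply σu (seqWord z 0 m) = seqWord z 0 (F m) := by
    intro m
    induction m with
    | zero => simp [seqWord_zero, morphApply_nil, hF0]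
    | succ m ih =>
      rw [seqWord_snoc, zero_add, morphApply_append, ih, morphApply_singleton, hσu_eq m]
      have h := seqWord_append z 0 (F m) (F (m + 1) - F m)
      rw [zero_add, show F m + (F (m + 1) - F m) = F (m + 1) by
        have := hFmono (show m < m + 1 by omega); omega] at h
      exact h.symm
  have hiter2 : ∀ n, morphIter σu n [0] = seqWord z 0 (F^[n] 1) := by
    intro n
    induction n with
    | zero =>
      show [0] = seqWord z 0 1
      rw [seqWord_one, hz0]
    | succ n ih =>
      show morphApply σu (morphIter σu n [0]) = _
      rw [ih, hmap, Function.iterate_succ_apply']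
  have hFiter : ∀ n, n + 1 ≤ F^[n] 1 := by
    intro n
    induction n with
    | zero => simp
    | succ n ih =>
      rw [Function.iterate_succ_apply']
      have := hFgt (F^[n] 1) (by omega)
      omega
  first
  | · -- tendsto
      apply Filter.tendsto_atTop_mono (f := id) ?_ Filter.tendsto_id
      intro n
      rw [hiter2 n, seqWord_length]
      have := hFiter n
      simp only [id]
      omega
  | · -- prefixes of z
      intro n
      rw [hiter2 n]
      show seqWord z 0 ((seqWord z 0 (F^[n] 1)).length) = seqWord z 0 (F^[n] 1)
      rw [seqWord_length]
  }
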